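/- For any point x ∈ S^d with x ≠ ±v, the residual ξ = ρ_d(x,v) - r from the subsphere A(v,r) satisfies |ξ| = ρ_d(x, P(x)), where P(x) is the closest point on A(v,r) to x. -/

import Mathlib

open scoped RealInnerProductSpace

/-- For `x ∈ S^d` with `x ≠ ±v`, the residual `ξ = ρ_d(x,v) - r` from the subsphere
`A(v,r)` satisfies `|ξ| = ρ_d(x, P(x))`, where
`P(x) = cos(r)v + sin(r)(x - ⟨v,x⟩v)/‖x - ⟨v,x⟩v‖` is the closest point on `A(v,r)`. -/
theorem residual_abs_eq_dist_to_projection (d : ℕ)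
    (v x : EuclideanSpace ℝ (Fin (d + 1))) (hv : ‖v‖ = 1) (hx : ‖x‖ = 1)
    (hxv : x ≠ v) (hxv' : x ≠ -v)
    (r : ℝ) (hr : r ∈ Set.Ioc 0 (Real.pi / 2)) :
    |Real.arccos ⟪x, v⟫ - r| =
      Real.arccos ⟪x, Real.cos r • v +
        Real.sin r • (‖x - ⟪v, x⟫ • v‖⁻¹ • (x - ⟪v, x⟫ • v))⟫ := by
  obtain ⟨hr0, hrpi⟩ := hr
  set t : ℝ := ⟪x, v⟫ with ht
  have hvx : ⟪v, x⟫ = t := (real_inner_comm v x).symm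
  have hxx : ⟪x, x⟫ = 1 := by
    rw [real_inner_self_eq_norm_sq, hx]; norm_num
  have hvv : ⟪v, v⟫ = 1 := by
    rw [real_inner_self_eq_norm_sq, hv]; norm_num
  set w : EuclideanSpace ℝ (Fin (d + 1)) := x - ⟪v, x⟫ • v with hw
  have hxw : ⟪x, w⟫ = 1 - t ^ 2 := by
    rw [hw, hvx, inner_sub_right, real_inner_smul_right, hxx, ← ht]; ring
  have hnw : ‖w‖ ^ 2 = 1 - t ^ 2 := by
    rw [← real_inner_self_eq_norm_sq, hw, hvx, inner_sub_left, inner_sub_right,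
      inner_sub_right, real_inner_smul_left, real_inner_smul_left,
      real_inner_smul_right, real_inner_smul_right, hxx, hvv, hvx, ← ht]
    ring
  have hwne : w ≠ 0 := by
    intro h
    rw [hw, hvx, sub_eq_zero] at h
    have h1 : |t| = 1 := by
      have := congrArg norm h
      rw [hx, norm_smul, hv, mul_one] at this
      simpa using this.symm
    rcases abs_eq (by norm_num : (0:ℝ) ≤ 1) |>.mp h1 with h2 | h2
    · exact hxv (by rw [h, h2, one_smul])
    · exact hxv' (by rw [h, h2, neg_one_smul])
  have hwpos : 0 < ‖w‖ := norm_pos_iff.mpr hwne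
  have hpos : 0 < 1 - t ^ 2 := by rw [← hnw]; positivity
  have ht1 : -1 ≤ t := by nlinarith
  have ht2 : t ≤ 1 := by nlinarith
  have hnw' : ‖w‖ = Real.sqrt (1 - t ^ 2) := by
    rw [← hnw, Real.sqrt_sq hwpos.le]
  have hinner : ⟪x, Real.cos r • v + Real.sin r • (‖w‖⁻¹ • w)⟫
      = Real.cos (Real.arccos t - r) := by
    rw [inner_add_right, inner_smul_right, inner_smul_right, inner_smul_right,
      hxw, Real.cos_sub, Real.cos_arccos ht1 ht2, Real.sin_arccos, ← ht, hnw']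
    have hsq : Real.sqrt (1 - t ^ 2) * Real.sqrt (1 - t ^ 2) = 1 - t ^ 2 :=
      Real.mul_self_sqrt hpos.le
    have hsqpos : 0 < Real.sqrt (1 - t ^ 2) := Real.sqrt_pos.mpr hpos
    field_simp
    linear_combination (-Real.sin r) * hsq
  rw [hinner, ← Real.cos_abs (Real.arccos t - r), Real.arccos_cos (abs_nonneg _)]
  · rcases abs_cases (Real.arccos t - r) with ⟨h, _⟩ | ⟨h, _⟩ <;> rw [h] <;>
      [skip; skip] <;>
    · have h1 := Real.arccos_le_pi t
      have h2 := Real.arccos_nonneg t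
      have hpi := Real.pi_pos
      linarith
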